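/- For each r ∈ [1,n], the Jucys–Murphy element l_r centralizes the subalgebra of H_n(A) generated by s_1,…,s_{r−2} and A^{⊗(r−1)} ⊗ 1^{⊗(n−r+1)}. In particular, the Jucys–Murphy elements l_1,…,l_n pairwise commute. -/

import Mathlib

/-!
Statement 7 (Lemma `JMcentS` and Corollary 3.17): the Jucys–Murphy element `l_r`
of `H_n(A)` centralizes the subalgebra generated by `s_1, …, s_{r-2}` and
`A^{⊗(r-1)} ⊗ 1^{⊗(n-r+1)}`; in particular, the Jucys–Murphy elements
`l_1, …, l_n` pairwise commute.

Here indices are `0`-based: `jmEl n D r` is the Jucys–Murphy element `l_{r+1}` of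
the paper, the transpositions below are `s_j = (j+1, j+2)` (`1`-based) with both
moved letters among the first `r` ones, and the pure tensors have `1`'s in all
slots with (`0`-based) index `≥ r`.
-/

open scoped TensorProduct


noncomputable section

/-- The distinguished element `Δ(1)` of a graded symmetric algebra. -/
noncomputable def DeltaElem (k A : Type*) [CommRing k] [Ring A] [Algebra k A]
    [Module.Free k A] [Module.Finite k A]
    (φ : A ≃ₗ[k] Module.Dual k A) : A ⊗[k] A :=
  TensorProduct.map φ.symm.toLinearMap φ.symm.toLinearMap
    ((TensorProduct.dualDistribEquiv k A A).symm
      ((LinearMap.mul' k A).dualMap (φ 1)))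

variable (k A : Type*) [CommRing k] [Ring A] [Algebra k A] (n : ℕ)

/-- The `n`-fold tensor power `A^{⊗ n}`. -/
abbrev TPow := PiTensorProduct k (fun _ : Fin n => A)

/-- The place permutation action of `σ ∈ S_n` on `A^{⊗n}`:
`^σ(v_1 ⊗ ⋯ ⊗ v_n) = v_{σ⁻¹ 1} ⊗ ⋯ ⊗ v_{σ⁻¹ n}`. -/
noncomputable def permAct (σ : Equiv.Perm (Fin n)) : TPow k A n ≃ₗ[k] TPow k A n :=
  PiTensorProduct.reindex k (fun _ : Fin n => A) σ

/-- The map `ι_{t,u} : A ⊗ A → A^{⊗n}` placing the two factors in slots `t` and `u`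
(`t ≠ u`) and `1`'s elsewhere. -/
noncomputable def slotEmb (t u : Fin n) (h : t ≠ u) : A ⊗[k] A →ₗ[k] TPow k A n :=
  TensorProduct.lift <| LinearMap.mk₂ k
    (fun a b => PiTensorProduct.tprod k
        (Function.update (Function.update (fun _ : Fin n => (1 : A)) t a) u b))
    (by
      intro a a' b
      try dsimp only
      rw [Function.update_comm h, Function.update_comm h, Function.update_comm h,
        MultilinearMap.map_update_add])
    (by
      intro c a b
      try dsimp only
      rw [Function.update_comm h, Function.update_comm h,
        MultilinearMap.map_update_smul])
    (by intro a b b'; rw [MultilinearMap.map_update_add])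
    (by intro c a b; rw [MultilinearMap.map_update_smul])

/-- `Δ_{t,u} := ι_{t,u}(Δ(1)) ∈ A^{⊗n}`. -/
noncomputable def DeltaSlot (D : A ⊗[k] A) (t u : Fin n) (h : t ≠ u) : TPow k A n :=
  slotEmb k A n t u h D

/-- Generators of the rank `n` affinization `H_n(A)`. -/
inductive AffGen : Type _
  | z : Fin n → AffGen
  | t : TPow k A n → AffGen
  | s : Equiv.Perm (Fin n) → AffGen

variable {k A}

open FreeAlgebra in
/-- The defining relations of the rank `n` affinization `H_n(A)` (relative to a
choice of distinguished element `D = Δ(1) ∈ A ⊗ A`): the relations of the free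
product `k[z_1,…,z_n] ⋆ A^{⊗n} ⋆ kS_n` together with the commutation relations
(3.4)–(3.6) of Definition 3.3. -/
inductive AffRel (D : A ⊗[k] A) :
    FreeAlgebra k (AffGen k A n) → FreeAlgebra k (AffGen k A n) → Prop
  -- `A^{⊗n}` is a subalgebra
  | t_add (a b : TPow k A n) :
      AffRel D (ι k (.t (a + b))) (ι k (.t a) + ι k (.t b))
  | t_smul (c : k) (a : TPow k A n) :
      AffRel D (ι k (.t (c • a))) (c • ι k (.t a))
  | t_mul (a b : TPow k A n) :
      AffRel D (ι k (.t (a * b))) (ι k (.t a) * ι k (.t b))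
  | t_one : AffRel D (ι k (.t 1)) 1
  -- `k S_n` is a subalgebra
  | s_mul (σ τ : Equiv.Perm (Fin n)) :
      AffRel D (ι k (.s (σ * τ))) (ι k (.s σ) * ι k (.s τ))
  | s_one : AffRel D (ι k (.s 1)) 1
  -- the polynomial generators commute
  | zz (i j : Fin n) :
      AffRel D (ι k (.z i) * ι k (.z j)) (ι k (.z j) * ι k (.z i))
  -- relation (3.4): `a z_j = z_j a`
  | az (a : TPow k A n) (j : Fin n) :
      AffRel D (ι k (.t a) * ι k (.z j)) (ι k (.z j) * ι k (.t a))
  -- relation (3.5): `s_i a = (^{s_i} a) s_i`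
  | sa (i : Fin n) (h : (i : ℕ) + 1 < n) (a : TPow k A n) :
      AffRel D (ι k (.s (Equiv.swap i ⟨i + 1, h⟩)) * ι k (.t a))
        (ι k (.t (permAct k A n (Equiv.swap i ⟨i + 1, h⟩) a)) *
          ι k (.s (Equiv.swap i ⟨i + 1, h⟩)))
  -- relation (3.6): `s_i z_j - z_{s_i j} s_i = (δ_{i,j} - δ_{i+1,j}) Δ_{i,i+1}`
  | sz (i : Fin n) (h : (i : ℕ) + 1 < n) (j : Fin n) :
      AffRel D (ι k (.s (Equiv.swap i ⟨i + 1, h⟩)) * ι k (.z j))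
        (ι k (.z (Equiv.swap i ⟨i + 1, h⟩ j)) * ι k (.s (Equiv.swap i ⟨i + 1, h⟩)) +
          ((if j = i then (1 : k) else 0) - (if j = ⟨i + 1, h⟩ then (1 : k) else 0)) •
            ι k (.t (DeltaSlot k A n D i ⟨i + 1, h⟩
              (ne_of_lt (Fin.lt_def.mpr (Nat.lt_succ_self _))))))

/-- The rank `n` affinization `H_n(A)` of the symmetric algebra `A`, presented by
generators and relations. -/
abbrev AffAlg (D : A ⊗[k] A) := RingQuot (AffRel (k := k) (A := A) n D)

variable (D : A ⊗[k] A)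

/-- The generator `z_i ∈ H_n(A)`. -/
noncomputable def zE (i : Fin n) : AffAlg n D :=
  RingQuot.mkAlgHom k (AffRel n D) (FreeAlgebra.ι k (.z i))

/-- The canonical map `A^{⊗n} → H_n(A)`. -/
noncomputable def tE : TPow k A n →ₗ[k] AffAlg n D where
  toFun a := RingQuot.mkAlgHom k (AffRel n D) (FreeAlgebra.ι k (.t a))
  map_add' a b := by
    have := RingQuot.mkAlgHom_rel k (AffRel.t_add (D := D) (n := n) a b)
    simpa using this
  map_smul' c a := by
    have := RingQuot.mkAlgHom_rel k (AffRel.t_smul (D := D) (n := n) c a)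
    simpa using this

/-- The canonical image of `σ ∈ S_n` in `H_n(A)`. -/
noncomputable def sE (σ : Equiv.Perm (Fin n)) : AffAlg n D :=
  RingQuot.mkAlgHom k (AffRel n D) (FreeAlgebra.ι k (.s σ))

/-- The canonical map `k S_n → H_n(A)`. -/
noncomputable def gE : MonoidAlgebra k (Equiv.Perm (Fin n)) →ₐ[k] AffAlg n D :=
  MonoidAlgebra.lift k (AffAlg n D) (Equiv.Perm (Fin n))
    { toFun := fun σ => sE n D σ
      map_one' := by
        have := RingQuot.mkAlgHom_rel k (AffRel.s_one (D := D) (n := n))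
        simpa [sE] using this
      map_mul' := fun σ τ => by
        have := RingQuot.mkAlgHom_rel k (AffRel.s_mul (D := D) (n := n) σ τ)
        simpa [sE] using this }

/-- The canonical `k`-linear map `k[z_1, …, z_n] → H_n(A)` sending a monomial
`z^m` to `z_1^{m_1} ⋯ z_n^{m_n}`. -/
noncomputable def zMon : MvPolynomial (Fin n) k →ₗ[k] AffAlg n D :=
  (MvPolynomial.basisMonomials (Fin n) k).constr k
    (fun m => ((List.finRange n).map (fun i => zE n D i ^ m i)).prod)

/-- The underlying `k`-module `V = k[z_1,…,z_n] ⊗ A^{⊗n} ⊗ kS_n`. -/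
abbrev AffModV := MvPolynomial (Fin n) k ⊗[k]
  (TPow k A n ⊗[k] MonoidAlgebra k (Equiv.Perm (Fin n)))

/-- The multiplication map `V → H_n(A)`, `f ⊗ a ⊗ w ↦ f a w`. -/
noncomputable def mulMap : AffModV (k := k) (A := A) n →ₗ[k] AffAlg n D :=
  TensorProduct.lift <| (LinearMap.mul k (AffAlg n D)).compl₁₂ (zMon n D)
    (TensorProduct.lift <| (LinearMap.mul k (AffAlg n D)).compl₁₂ (tE n D)
      (gE n D).toLinearMap)

end

variable {k A : Type*} [CommRing k] [Ring A] [Algebra k A]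

/-- The Jucys–Murphy element `l_r := -∑_{t<r} Δ_{t,r} (t,r)` of `H_n(A)`. -/
noncomputable def jmEl (n : ℕ) (D : A ⊗[k] A) (r : Fin n) : AffAlg n D :=
  - ∑ t : Fin n, if h : t < r then
      tE n D (DeltaSlot k A n D t r (ne_of_lt h)) * sE n D (Equiv.swap t r)
    else 0

/-! ### Auxiliary lemmas -/

section AuxCasimir

variable [Module.Free k A] [Module.Finite k A]

/-- The composite equivalence `A ⊗ A ≃ Dual (A ⊗ A)` induced by `φ`. -/
noncomputable def Fequiv (φ : A ≃ₗ[k] Module.Dual k A) :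
    A ⊗[k] A ≃ₗ[k] Module.Dual k (A ⊗[k] A) :=
  (TensorProduct.congr φ φ).trans (TensorProduct.dualDistribEquiv k A A)

lemma Fequiv_tmul (φ : A ≃ₗ[k] Module.Dual k A) (u v x y : A) :
    Fequiv φ (u ⊗ₜ[k] v) (x ⊗ₜ[k] y) = φ u x * φ v y := by
  simp [Fequiv, TensorProduct.dualDistribEquiv]

lemma Fequiv_Delta (φ : A ≃ₗ[k] Module.Dual k A) :
    Fequiv φ (DeltaElem k A φ) = (LinearMap.mul' k A).dualMap (φ 1) := by
  have hz : ∀ z : Module.Dual k A ⊗[k] Module.Dual k A,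
      (TensorProduct.congr φ φ)
        (TensorProduct.map φ.symm.toLinearMap φ.symm.toLinearMap z) = z := by
    intro z
    induction z using TensorProduct.induction_on with
    | zero => simp
    | tmul x y => simp
    | add z1 z2 h1 h2 => simp [h1, h2]
  rw [DeltaElem, Fequiv, LinearEquiv.trans_apply, hz]
  exact (TensorProduct.dualDistribEquiv k A A).apply_symm_apply _

lemma casimir (φ : A ≃ₗ[k] Module.Dual k A)
    (hbimod : ∀ a x b y : A, φ (a * x * b) y = φ x (b * y * a)) (a : A) :
    (a ⊗ₜ[k] (1 : A)) * DeltaElem k A φ = DeltaElem k A φ * ((1 : A) ⊗ₜ[k] a) := by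
  apply (Fequiv φ).injective
  have hl : ∀ z : A ⊗[k] A, ∀ x y : A,
      Fequiv φ ((a ⊗ₜ[k] (1 : A)) * z) (x ⊗ₜ[k] y) = Fequiv φ z ((x * a) ⊗ₜ[k] y) := by
    intro z
    induction z using TensorProduct.induction_on with
    | zero => intro x y; simp
    | tmul u v =>
        intro x y
        rw [Algebra.TensorProduct.tmul_mul_tmul, one_mul, Fequiv_tmul, Fequiv_tmul]
        have h := hbimod a u 1 x
        rw [mul_one, one_mul] at h
        rw [h]
    | add z1 z2 h1 h2 => intro x y; simp [mul_add, h1, h2]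
  have hr : ∀ z : A ⊗[k] A, ∀ x y : A,
      Fequiv φ (z * ((1 : A) ⊗ₜ[k] a)) (x ⊗ₜ[k] y) = Fequiv φ z (x ⊗ₜ[k] (a * y)) := by
    intro z
    induction z using TensorProduct.induction_on with
    | zero => intro x y; simp
    | tmul u v =>
        intro x y
        rw [Algebra.TensorProduct.tmul_mul_tmul, mul_one, Fequiv_tmul, Fequiv_tmul]
        have h := hbimod 1 v a y
        rw [one_mul, mul_one] at h
        rw [h]
    | add z1 z2 h1 h2 => intro x y; simp [add_mul, h1, h2]
  apply TensorProduct.ext'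
  intro x y
  rw [hl, hr, Fequiv_Delta]
  simp [mul_assoc]

end AuxCasimir

section AuxTPow

variable (n : ℕ)

lemma slotEmb_tmul (t u : Fin n) (h : t ≠ u) (x y : A) :
    slotEmb k A n t u h (x ⊗ₜ[k] y) =
      PiTensorProduct.tprod k
        (Function.update (Function.update (fun _ : Fin n => (1 : A)) t x) u y) := rfl

lemma permAct_tprod (σ : Equiv.Perm (Fin n)) (v : Fin n → A) :
    permAct k A n σ (PiTensorProduct.tprod k v) =
      PiTensorProduct.tprod k (fun i => v (σ.symm i)) := by
  simp [permAct]

lemma permAct_one (a : TPow k A n) : permAct k A n 1 a = a := by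
  show PiTensorProduct.reindex k (fun _ : Fin n => A) (Equiv.refl _) a = a
  rw [PiTensorProduct.reindex_refl]
  rfl

lemma permAct_mul (σ τ : Equiv.Perm (Fin n)) (a : TPow k A n) :
    permAct k A n (σ * τ) a = permAct k A n σ (permAct k A n τ a) := by
  show PiTensorProduct.reindex k (fun _ : Fin n => A) (τ.trans σ) a = _
  rw [← PiTensorProduct.reindex_trans]
  rfl

lemma permAct_slotEmb (σ : Equiv.Perm (Fin n)) (t u : Fin n) (h : t ≠ u) (z : A ⊗[k] A) :
    permAct k A n σ (slotEmb k A n t u h z) =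
      slotEmb k A n (σ t) (σ u) (fun e => h (σ.injective e)) z := by
  induction z using TensorProduct.induction_on with
  | zero => simp
  | tmul x y =>
      rw [slotEmb_tmul, slotEmb_tmul, permAct_tprod]
      congr 1
      funext i
      rcases eq_or_ne i (σ u) with hu | hu
      · subst hu
        rw [Function.update_self, show σ.symm (σ u) = u from σ.symm_apply_apply u,
          Function.update_self]
      · rw [Function.update_of_ne hu, Function.update_of_ne
          (by simpa using fun e => hu (by rw [← e, Equiv.apply_symm_apply]))]
        rcases eq_or_ne i (σ t) with ht | ht
        · subst ht
          rw [show σ.symm (σ t) = t from σ.symm_apply_apply t, Function.update_self,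
            Function.update_self]
        · rw [Function.update_of_ne ht, Function.update_of_ne
            (by simpa using fun e => ht (by rw [← e, Equiv.apply_symm_apply]))]
  | add z1 z2 h1 h2 => simp [h1, h2]

end AuxTPow

section AuxAff

variable (n : ℕ) (D : A ⊗[k] A)

lemma tE_apply (a : TPow k A n) :
    tE n D a = RingQuot.mkAlgHom k (AffRel n D) (FreeAlgebra.ι k (.t a)) := rfl

lemma sE_apply (σ : Equiv.Perm (Fin n)) :
    sE n D σ = RingQuot.mkAlgHom k (AffRel n D) (FreeAlgebra.ι k (.s σ)) := rfl

lemma tE_mul (a b : TPow k A n) : tE n D (a * b) = tE n D a * tE n D b := by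
  have h := RingQuot.mkAlgHom_rel k (AffRel.t_mul (D := D) (n := n) a b)
  rw [map_mul] at h
  exact h

lemma tE_one : tE n D (1 : TPow k A n) = 1 := by
  have h := RingQuot.mkAlgHom_rel k (AffRel.t_one (D := D) (n := n))
  rw [map_one] at h
  exact h

lemma sE_mul (σ τ : Equiv.Perm (Fin n)) : sE n D (σ * τ) = sE n D σ * sE n D τ := by
  have h := RingQuot.mkAlgHom_rel k (AffRel.s_mul (D := D) (n := n) σ τ)
  rw [map_mul] at h
  exact h

lemma sE_one : sE n D (1 : Equiv.Perm (Fin n)) = 1 := by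
  have h := RingQuot.mkAlgHom_rel k (AffRel.s_one (D := D) (n := n))
  rw [map_one] at h
  exact h

lemma sE_adj_tE (i : Fin n) (h : (i : ℕ) + 1 < n) (a : TPow k A n) :
    sE n D (Equiv.swap i ⟨(i : ℕ) + 1, h⟩) * tE n D a =
      tE n D (permAct k A n (Equiv.swap i ⟨(i : ℕ) + 1, h⟩) a) *
        sE n D (Equiv.swap i ⟨(i : ℕ) + 1, h⟩) := by
  have hrel := RingQuot.mkAlgHom_rel k (AffRel.sa (D := D) (n := n) i h a)
  rw [map_mul, map_mul] at hrel
  exact hrel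

lemma sE_tE (σ : Equiv.Perm (Fin n)) (a : TPow k A n) :
    sE n D σ * tE n D a = tE n D (permAct k A n σ a) * sE n D σ := by
  induction n with
  | zero =>
      have hσ : σ = 1 := by ext x; exact x.elim0
      subst hσ
      rw [sE_one, permAct_one, one_mul, mul_one]
  | succ m _ =>
      have hσ : σ ∈ Submonoid.closure
          (Set.range fun i : Fin m => Equiv.swap i.castSucc i.succ) := by
        rw [Equiv.Perm.mclosure_swap_castSucc_succ]
        exact Submonoid.mem_top σ
      revert a
      induction hσ using Submonoid.closure_induction with
      | mem τ hτ =>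
          obtain ⟨i, rfl⟩ := hτ
          intro a
          have h2 : ((i.castSucc : Fin (m + 1)) : ℕ) + 1 < m + 1 :=
            Nat.succ_lt_succ i.isLt
          have h3 : (⟨((i.castSucc : Fin (m + 1)) : ℕ) + 1, h2⟩ : Fin (m + 1)) = i.succ := rfl
          have := sE_adj_tE (m + 1) D i.castSucc h2 a
          rwa [h3] at this
      | one =>
          intro a
          rw [sE_one, permAct_one, one_mul, mul_one]
      | mul σ τ hσm hτm ihσ ihτ =>
          intro a
          rw [sE_mul, permAct_mul, mul_assoc, ihτ, ← mul_assoc, ihσ, mul_assoc, ← sE_mul]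

end AuxAff

section AuxSlotComm

variable (n : ℕ)

lemma slot_comm (D : A ⊗[k] A)
    (hD : ∀ a : A, (a ⊗ₜ[k] (1 : A)) * D = D * ((1 : A) ⊗ₜ[k] a))
    (t u : Fin n) (h : t ≠ u) (v : Fin n → A) (hu : v u = 1) :
    slotEmb k A n t u h D * PiTensorProduct.tprod k (fun i => v (Equiv.swap t u i)) =
      PiTensorProduct.tprod k v * slotEmb k A n t u h D := by
  set w : Fin n → A := Function.update v t 1 with hw
  have hwt : w t = 1 := Function.update_self t 1 v
  have hwu : w u = 1 := by rw [hw, Function.update_of_ne (Ne.symm h), hu]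
  have hwi : ∀ i, i ≠ t → w i = v i := fun i hi => Function.update_of_ne hi 1 v
  have claimA : ∀ z : A ⊗[k] A,
      slotEmb k A n t u h z * PiTensorProduct.tprod k (fun i => v (Equiv.swap t u i)) =
        slotEmb k A n t u h (z * ((1 : A) ⊗ₜ[k] v t)) * PiTensorProduct.tprod k w := by
    intro z
    induction z using TensorProduct.induction_on with
    | zero => simp
    | tmul x y =>
        rw [Algebra.TensorProduct.tmul_mul_tmul, mul_one, slotEmb_tmul, slotEmb_tmul,
          PiTensorProduct.tprod_mul_tprod, PiTensorProduct.tprod_mul_tprod]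
        congr 1
        funext i
        rcases eq_or_ne i u with hiu | hiu
        · subst hiu
          simp only [Pi.mul_apply, Function.update_self, Equiv.swap_apply_right, hwu, mul_one]
        · rcases eq_or_ne i t with hit | hit
          · subst hit
            simp only [Pi.mul_apply, Function.update_of_ne h, Function.update_self,
              Equiv.swap_apply_left, hu, mul_one, hwt]
          · simp only [Pi.mul_apply, Function.update_of_ne hiu, Function.update_of_ne hit,
              Equiv.swap_apply_of_ne_of_ne hit hiu, one_mul, hwi i hit]
    | add z1 z2 h1 h2 => simp only [add_mul, map_add]; rw [h1, h2]
  have claimB : ∀ z : A ⊗[k] A,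
      PiTensorProduct.tprod k v * slotEmb k A n t u h z =
        slotEmb k A n t u h ((v t ⊗ₜ[k] (1 : A)) * z) * PiTensorProduct.tprod k w := by
    intro z
    induction z using TensorProduct.induction_on with
    | zero => simp
    | tmul x y =>
        rw [Algebra.TensorProduct.tmul_mul_tmul, one_mul, slotEmb_tmul, slotEmb_tmul,
          PiTensorProduct.tprod_mul_tprod, PiTensorProduct.tprod_mul_tprod]
        congr 1
        funext i
        rcases eq_or_ne i u with hiu | hiu
        · subst hiu
          simp only [Pi.mul_apply, Function.update_self, hu, one_mul, hwu, mul_one]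
        · rcases eq_or_ne i t with hit | hit
          · subst hit
            simp only [Pi.mul_apply, Function.update_of_ne h, Function.update_self, hwt, mul_one]
          · simp only [Pi.mul_apply, Function.update_of_ne hiu, Function.update_of_ne hit,
              mul_one, one_mul, hwi i hit]
    | add z1 z2 h1 h2 => simp only [map_add, mul_add, add_mul]; rw [h1, h2]
  rw [claimA D, claimB D, hD (v t)]

end AuxSlotComm

section AuxMember

/-- The generating set of the centralized subalgebra. -/
noncomputable def genSet (n : ℕ) (D : A ⊗[k] A) (r : Fin n) : Set (AffAlg n D) :=
  {y : AffAlg n D | ∃ (j : Fin n) (h : (j : ℕ) + 1 < n),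
      (j : ℕ) + 2 ≤ (r : ℕ) ∧ y = sE n D (Equiv.swap j ⟨(j : ℕ) + 1, h⟩)} ∪
    {y : AffAlg n D | ∃ v : Fin n → A,
      (∀ i : Fin n, r ≤ i → v i = 1) ∧ y = tE n D (PiTensorProduct.tprod k v)}

variable (n : ℕ) (D : A ⊗[k] A)

lemma mem_adjoin_tE (r t u : Fin n) (h : t ≠ u) (ht : t < r) (hu : u < r) (z : A ⊗[k] A) :
    tE n D (slotEmb k A n t u h z) ∈ Algebra.adjoin k (genSet n D r) := by
  induction z using TensorProduct.induction_on with
  | zero => rw [map_zero, map_zero]; exact zero_mem _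
  | tmul x y =>
      rw [slotEmb_tmul]
      refine Algebra.subset_adjoin (Or.inr ⟨_, fun i hi => ?_, rfl⟩)
      have hit : i ≠ t := by
        intro e
        rw [Fin.le_def] at hi; rw [Fin.lt_def] at ht; subst e; omega
      have hiu : i ≠ u := by
        intro e
        rw [Fin.le_def] at hi; rw [Fin.lt_def] at hu; subst e; omega
      rw [Function.update_of_ne hiu, Function.update_of_ne hit]
  | add z1 z2 h1 h2 => rw [map_add, map_add]; exact add_mem h1 h2

lemma mem_adjoin_swap (r : Fin n) :
    ∀ (m : ℕ) (t s : Fin n), (s : ℕ) ≤ m → t < s → s < r →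
      sE n D (Equiv.swap t s) ∈ Algebra.adjoin k (genSet n D r) := by
  intro m
  induction m with
  | zero =>
      intro t s hs hts _
      rw [Fin.lt_def] at hts
      omega
  | succ m ih =>
      intro t s hs hts hsr
      by_cases hadj : (t : ℕ) + 1 = (s : ℕ)
      · have hn : (t : ℕ) + 1 < n := hadj ▸ s.isLt
        have hfin : (⟨(t : ℕ) + 1, hn⟩ : Fin n) = s := Fin.ext hadj
        refine Algebra.subset_adjoin (Or.inl ⟨t, hn, ?_, by rw [hfin]⟩)
        have := hsr
        rw [Fin.lt_def] at this
        omega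
      · have h1 : (t : ℕ) + 1 < (s : ℕ) :=
          lt_of_le_of_ne (Nat.succ_le_of_lt hts) hadj
        have hs1 : 1 ≤ (s : ℕ) := by omega
        set s' : Fin n := ⟨(s : ℕ) - 1, lt_trans (by omega) s.isLt⟩ with hs'
        have hts' : t < s' := by rw [Fin.lt_def]; show (t : ℕ) < (s : ℕ) - 1; omega
        have hs's : s' < s := by rw [Fin.lt_def]; show (s : ℕ) - 1 < (s : ℕ); omega
        have hs'r : s' < r := lt_trans hs's hsr
        have hts2 : t ≠ s' := ne_of_lt hts'
        have hts3 : t ≠ s := ne_of_lt hts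
        have hσmem : sE n D (Equiv.swap s' s) ∈ Algebra.adjoin k (genSet n D r) := by
          have hn : (s' : ℕ) + 1 < n := by
            show (s : ℕ) - 1 + 1 < n
            have := s.isLt; omega
          have hfin : (⟨(s' : ℕ) + 1, hn⟩ : Fin n) = s := by
            apply Fin.ext
            show (s : ℕ) - 1 + 1 = (s : ℕ)
            omega
          refine Algebra.subset_adjoin (Or.inl ⟨s', hn, ?_, by rw [hfin]⟩)
          show (s : ℕ) - 1 + 2 ≤ (r : ℕ)
          have := hsr
          rw [Fin.lt_def] at this
          omega
        have hdecomp : Equiv.swap t s =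
            Equiv.swap s' s * Equiv.swap t s' * Equiv.swap s' s := by
          have happ := Equiv.swap_apply_apply (Equiv.swap s' s) t s'
          rw [Equiv.swap_apply_of_ne_of_ne hts2 hts3, Equiv.swap_apply_left] at happ
          rw [happ, Equiv.swap_inv]
        rw [hdecomp, sE_mul, sE_mul]
        exact mul_mem (mul_mem hσmem (ih t s' (by show (s : ℕ) - 1 ≤ m; omega) hts' hs'r))
          hσmem

end AuxMember


section Main

private lemma slotEmb_congr {n : ℕ} (t : Fin n) {u u' : Fin n} (huu : u = u') (h : t ≠ u) :
    slotEmb k A n t u h = slotEmb k A n t u' (huu ▸ h) := by subst huu; rfl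

private lemma neg_mul_comm_helper {R : Type*} [Ring R] {a b : R} (h : a * b = b * a) :
    -a * b = b * -a := by
  rw [neg_mul, h, mul_neg]

variable (n : ℕ) (D : A ⊗[k] A)

lemma jm_sE_comm (r : Fin n) (σ : Equiv.Perm (Fin n)) (hσr : σ r = r)
    (hlt : ∀ u : Fin n, u < r → σ u < r) (hfix : ∀ u : Fin n, ¬u < r → σ u = u) :
    jmEl n D r * sE n D σ = sE n D σ * jmEl n D r := by
  simp only [jmEl, DeltaSlot]
  apply neg_mul_comm_helper
  rw [Finset.sum_mul, Finset.mul_sum]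
  have key : ∀ u : Fin n,
      sE n D σ * (if h : u < r then
          tE n D (slotEmb k A n u r (ne_of_lt h) D) * sE n D (Equiv.swap u r) else 0) =
        (if h : σ u < r then
          tE n D (slotEmb k A n (σ u) r (ne_of_lt h) D) * sE n D (Equiv.swap (σ u) r)
        else 0) * sE n D σ := by
    intro u
    by_cases h : u < r
    · rw [dif_pos h, dif_pos (hlt u h), ← mul_assoc, sE_tE, permAct_slotEmb,
        slotEmb_congr (σ u) hσr]
      have hswap : σ * Equiv.swap u r = Equiv.swap (σ u) r * σ := by
        have happ := Equiv.swap_apply_apply σ u r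
        rw [hσr] at happ
        rw [happ]
        group
      rw [mul_assoc, ← sE_mul, hswap, sE_mul, ← mul_assoc]
    · rw [dif_neg h, dif_neg (by rw [hfix u h]; exact h), mul_zero, zero_mul]
  simp only [key]
  exact (Equiv.sum_comp σ _).symm

lemma jm_tE_comm (hD : ∀ a : A, (a ⊗ₜ[k] (1 : A)) * D = D * ((1 : A) ⊗ₜ[k] a))
    (r : Fin n) (v : Fin n → A) (hv : ∀ i : Fin n, r ≤ i → v i = 1) :
    jmEl n D r * tE n D (PiTensorProduct.tprod k v) =
      tE n D (PiTensorProduct.tprod k v) * jmEl n D r := by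
  simp only [jmEl, DeltaSlot]
  apply neg_mul_comm_helper
  rw [Finset.sum_mul, Finset.mul_sum]
  apply Finset.sum_congr rfl
  intro u _
  by_cases h : u < r
  · rw [dif_pos h, mul_assoc, sE_tE, permAct_tprod]
    simp only [Equiv.symm_swap]
    rw [← mul_assoc, ← tE_mul, slot_comm n D hD u r (ne_of_lt h) v (hv r le_rfl),
      tE_mul, mul_assoc]
  · rw [dif_neg h, zero_mul, mul_zero]

lemma jm_cent (hD : ∀ a : A, (a ⊗ₜ[k] (1 : A)) * D = D * ((1 : A) ⊗ₜ[k] a)) (r : Fin n) :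
    ∀ x ∈ Algebra.adjoin k (genSet n D r), jmEl n D r * x = x * jmEl n D r := by
  intro x hx
  induction hx using Algebra.adjoin_induction with
  | mem y hy =>
      rcases hy with ⟨j, hj, hjr, rfl⟩ | ⟨v, hv, rfl⟩
      · refine jm_sE_comm n D r _ ?_ ?_ ?_
        · exact Equiv.swap_apply_of_ne_of_ne
            (Fin.ne_of_val_ne (by omega))
            (Fin.ne_of_val_ne (show (r : ℕ) ≠ (j : ℕ) + 1 by omega))
        · intro u hu
          rcases eq_or_ne u j with rfl | h1
          · rw [Equiv.swap_apply_left, Fin.lt_def]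
            show (u : ℕ) + 1 < (r : ℕ)
            omega
          · rcases eq_or_ne u (⟨(j : ℕ) + 1, hj⟩ : Fin n) with rfl | h2
            · rw [Equiv.swap_apply_right, Fin.lt_def]
              show (j : ℕ) < (r : ℕ)
              omega
            · rw [Equiv.swap_apply_of_ne_of_ne h1 h2]
              exact hu
        · intro u hu
          rw [Fin.lt_def, not_lt] at hu
          exact Equiv.swap_apply_of_ne_of_ne
            (Fin.ne_of_val_ne (by omega))
            (Fin.ne_of_val_ne (show (u : ℕ) ≠ (j : ℕ) + 1 by omega))
      · exact jm_tE_comm n D hD r v hv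
  | algebraMap c => exact (Algebra.commutes c _).symm
  | add x y hx hy ihx ihy => rw [mul_add, add_mul, ihx, ihy]
  | mul x y hx hy ihx ihy => rw [← mul_assoc, ihx, mul_assoc, ihy, ← mul_assoc]

lemma jm_mem (r s : Fin n) (hsr : s < r) :
    jmEl n D s ∈ Algebra.adjoin k (genSet n D r) := by
  simp only [jmEl, DeltaSlot]
  apply neg_mem
  apply sum_mem
  intro t _
  by_cases h : t < s
  · rw [dif_pos h]
    exact mul_mem (mem_adjoin_tE n D r t s (ne_of_lt h) (lt_trans h hsr) hsr D)
      (mem_adjoin_swap n D r (s : ℕ) t s le_rfl h hsr)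
  · rw [dif_neg h]
    exact zero_mem _

end Main
theorem stmt7
    (k A : Type*) [CommRing k] [IsNoetherianRing k] [Ring A] [Algebra k A]
    [Module.Free k A] [Module.Finite k A]
    (𝒜 : ℤ → Submodule k A) [GradedAlgebra 𝒜]
    (d : ℤ)
    (φ : A ≃ₗ[k] Module.Dual k A)
    (hbimod : ∀ a x b y : A, φ (a * x * b) y = φ x (b * y * a))
    (hdeg : ∀ t s : ℤ, ∀ x ∈ 𝒜 t, ∀ y ∈ 𝒜 s, s ≠ d - t → φ x y = 0)
    (n : ℕ) :
    letI D := DeltaElem k A φ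
    -- `l_r` centralizes the subalgebra generated by `s_1, …, s_{r-2}` and
    -- `A^{⊗(r-1)} ⊗ 1^{⊗(n-r+1)}`
    (∀ r : Fin n,
      ∀ x ∈ Algebra.adjoin k
        ({y : AffAlg n D | ∃ (j : Fin n) (h : (j : ℕ) + 1 < n),
            (j : ℕ) + 2 ≤ (r : ℕ) ∧ y = sE n D (Equiv.swap j ⟨(j : ℕ) + 1, h⟩)} ∪
          {y : AffAlg n D | ∃ v : Fin n → A,
            (∀ i : Fin n, r ≤ i → v i = 1) ∧ y = tE n D (PiTensorProduct.tprod k v)}),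
        jmEl n D r * x = x * jmEl n D r) ∧
    -- in particular, the Jucys–Murphy elements pairwise commute
    (∀ r s : Fin n, jmEl n D r * jmEl n D s = jmEl n D s * jmEl n D r) := by
  have hD := casimir φ hbimod
  refine ⟨fun r x hx => jm_cent n (DeltaElem k A φ) hD r x hx, fun r s => ?_⟩
  rcases lt_trichotomy s r with h | h | h
  · exact jm_cent n (DeltaElem k A φ) hD r _ (jm_mem n (DeltaElem k A φ) r s h)
  · rw [h]
  · exact (jm_cent n (DeltaElem k A φ) hD s _ (jm_mem n (DeltaElem k A φ) s r h)).symm
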